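/- For every 0 < ε < 1 there exists n₀ such that for every integer n ≥ n₀ and every positive integer q with q ≤ (1−ε)·n/2, Client has a strategy in the Client-Waiter game with bias q played on the board E(K_n) guaranteeing that at the end of the game his graph has a connected component containing at least e^{−5/(2ε)+3/2}·n vertices; in other words, C(n,q) ≥ e^{−5/(2ε)+3/2}·n. -/

import Mathlib

open Finset

variable {α : Type*}

/-- Auxiliary definition: `fuel` bounds the number of remaining rounds; `C` is the set of
elements claimed by Client so far; `F` is the set of free (unclaimed) elements.
`ClientCanAux q P fuel C F` says that Client can guarantee that his final claimed set
satisfies `P` in the Client-Waiter game with bias `q`: in each round Waiter offers a set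
`O` of at least one and at most `q+1` free elements, Client claims one element of `O`,
and Waiter claims the rest. -/
def ClientCanAux [DecidableEq α] (q : ℕ) (P : Finset α → Prop) :
    ℕ → Finset α → Finset α → Prop
  | 0, C, F => F = ∅ ∧ P C
  | fuel + 1, C, F =>
    if F = ∅ then P C
    else ∀ O ⊆ F, O.Nonempty → O.card ≤ q + 1 →
      ∃ x ∈ O, ClientCanAux q P fuel (insert x C) (F \ O)

/-- Client has a strategy in the Client-Waiter game with bias `q` on the board `X`
guaranteeing that the set of elements he has claimed at the end of the game satisfies `P`. -/
def ClientCanForce [DecidableEq α] (X : Finset α) (q : ℕ) (P : Finset α → Prop) : Prop :=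
  ClientCanAux q P X.card ∅ X

/-- Analogue of `ClientCanAux` for Waiter. -/
def WaiterCanAux [DecidableEq α] (q : ℕ) (P : Finset α → Prop) :
    ℕ → Finset α → Finset α → Prop
  | 0, C, F => F = ∅ ∧ P C
  | fuel + 1, C, F =>
    if F = ∅ then P C
    else ∃ O ⊆ F, O.Nonempty ∧ O.card ≤ q + 1 ∧
      ∀ x ∈ O, WaiterCanAux q P fuel (insert x C) (F \ O)

/-- Waiter has a strategy in the Client-Waiter game with bias `q` on the board `X`
guaranteeing that the set of elements claimed by Client at the end of the game
satisfies `P`. -/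
def WaiterCanForce [DecidableEq α] (X : Finset α) (q : ℕ) (P : Finset α → Prop) : Prop :=
  WaiterCanAux q P X.card ∅ X

/-- Client's graph: the graph whose edges are the edges claimed by Client. -/
def clientGraph {V : Type*} (C : Finset (Sym2 V)) : SimpleGraph V :=
  SimpleGraph.fromEdgeSet (↑C)

/-- The board for games played on `K_n`: the edge set of the complete graph on `n` vertices. -/
def Kboard (n : ℕ) : Finset (Sym2 (Fin n)) :=
  (⊤ : SimpleGraph (Fin n)).edgeFinset

/-- `G` contains a copy of `H`. -/
def ContainsCopy {W V : Type*} (H : SimpleGraph W) (G : SimpleGraph V) : Prop :=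
  ∃ f : W → V, Function.Injective f ∧ ∀ ⦃a b : W⦄, H.Adj a b → G.Adj (f a) (f b)

/-- The 2-density `d₂(H)` of a graph `H`. -/
noncomputable def twoDensity {β : Type*} (H : SimpleGraph β) : ℝ :=
  if 3 ≤ Nat.card β then ((H.edgeSet.ncard : ℝ) - 1) / ((Nat.card β : ℝ) - 2) else 0

/-- The maximum 2-density `m₂(H)` of a graph `H`. -/
noncomputable def maxTwoDensity {β : Type*} (H : SimpleGraph β) : ℝ :=
  sSup {x : ℝ | ∃ H' : H.Subgraph, 3 ≤ H'.verts.ncard ∧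
    x = ((H'.edgeSet.ncard : ℝ) - 1) / ((H'.verts.ncard : ℝ) - 2)}

/-- The maximum density `m(G)` of a graph `G`. -/
noncomputable def maxDensity {β : Type*} (G : SimpleGraph β) : ℝ :=
  sSup {x : ℝ | ∃ G' : G.Subgraph, G'.verts.Nonempty ∧
    x = (G'.edgeSet.ncard : ℝ) / (G'.verts.ncard : ℝ)}

/-- The arboricity `ar(G)` of a graph `G`. -/
noncomputable def arboricity {β : Type*} (G : SimpleGraph β) : ℝ :=
  sSup {x : ℝ | ∃ G' : G.Subgraph, 2 ≤ G'.verts.ncard ∧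
    x = (G'.edgeSet.ncard : ℝ) / ((G'.verts.ncard : ℝ) - 1)}

/-- `H` is strictly 2-balanced: every proper subgraph with at least 3 vertices has
strictly smaller 2-density. -/
def StrictlyTwoBalanced {β : Type*} (H : SimpleGraph β) : Prop :=
  ∀ H' : H.Subgraph, H' ≠ ⊤ → 3 ≤ H'.verts.ncard → twoDensity H'.coe < twoDensity H

open Classical in
/-- The probability that Client has a winning strategy in the `H`-game `CW(G_{n,p}, H, q)`,
where the random graph `G_{n,p}` is generated by keeping each edge of `K_n` independently
with probability `p`. -/
noncomputable def probClientWinsHGame {β : Type*} (H : SimpleGraph β) (q n : ℕ) (p : ℝ) : ℝ :=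
  ∑ E ∈ (Kboard n).powerset,
    p ^ E.card * (1 - p) ^ ((Kboard n).card - E.card) *
      (if ClientCanForce E q (fun C => ContainsCopy H (clientGraph C)) then 1 else 0)

/-- Vertices of the complete `k`-ary rooted tree of height `k`: a vertex at depth `i ≤ k`
is a sequence of `i` choices among `k` children. -/
abbrev TreeVert (k : ℕ) : Type := (i : Fin (k + 1)) × (Fin (i : ℕ) → Fin k)

/-- `u` is a child of `v` in the complete `k`-ary tree. -/
def IsChildOf {k : ℕ} (u v : TreeVert k) : Prop :=
  ∃ h : (u.1 : ℕ) = (v.1 : ℕ) + 1,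
    ∀ t : Fin (v.1 : ℕ), u.2 ⟨t.1, by have := t.2; omega⟩ = v.2 t

/-- The complete `k`-ary tree of height `k`, `T_{k,k}`. -/
def Tkk (k : ℕ) : SimpleGraph (TreeVert k) where
  Adj u v := IsChildOf u v ∨ IsChildOf v u
  symm := by constructor; intro u v h; tauto
  loopless := by
    constructor; intro u h
    rcases h with ⟨h, _⟩ | ⟨h, _⟩ <;> omega


section CWHelpers

open SimpleGraph

/-- A generic invariant-based sufficient condition for `ClientCanAux`. -/
lemma clientCanAux_of_inv [DecidableEq α] (q : ℕ) (P : Finset α → Prop)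
    (Inv : Finset α → Finset α → Prop)
    (hstep : ∀ C F, Inv C F → ∀ O ⊆ F, O.Nonempty → O.card ≤ q + 1 →
      ∃ x ∈ O, Inv (insert x C) (F \ O))
    (hfin : ∀ C, Inv C ∅ → P C) :
    ∀ fuel C F, F.card ≤ fuel → Inv C F → ClientCanAux q P fuel C F := by
  intro fuel
  induction fuel with
  | zero =>
    intro C F hF hInv
    have hFe : F = ∅ := Finset.card_eq_zero.mp (Nat.le_zero.mp hF)
    exact ⟨hFe, hfin C (hFe ▸ hInv)⟩
  | succ m ih =>
    intro C F hF hInv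
    show ClientCanAux q P (m + 1) C F
    rw [ClientCanAux]
    split_ifs with h
    · exact hfin C (h ▸ hInv)
    · intro O hO hOne hOcard
      obtain ⟨x, hx, hInv'⟩ := hstep C F hInv O hO hOne hOcard
      refine ⟨x, hx, ih _ _ ?_ hInv'⟩
      have := Finset.card_lt_card (Finset.sdiff_ssubset hO hOne)
      omega

/-- The "same nontrivial component" graph of Client's graph. -/
def reachGraph {n : ℕ} (C : Finset (Sym2 (Fin n))) : SimpleGraph (Fin n) where
  Adj u v := u ≠ v ∧ (clientGraph C).Reachable u v
  symm := ⟨fun _ _ h => ⟨h.1.symm, h.2.symm⟩⟩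
  loopless := ⟨fun _ h => h.1 rfl⟩

/-- The finset of "intra-component" pairs. -/
noncomputable def intraF {n : ℕ} (C : Finset (Sym2 (Fin n))) : Finset (Sym2 (Fin n)) :=
  @Set.toFinset _ (reachGraph C).edgeSet
    (@SimpleGraph.fintypeEdgeSet _ (reachGraph C) _ (Classical.decRel _))

lemma mem_intraF {n : ℕ} {C : Finset (Sym2 (Fin n))} {e : Sym2 (Fin n)} :
    e ∈ intraF C ↔ e ∈ (reachGraph C).edgeSet := by
  rw [intraF]
  exact @Set.mem_toFinset _ _ (@SimpleGraph.fintypeEdgeSet _ (reachGraph C) _ (Classical.decRel _)) _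

lemma mem_Kboard {n : ℕ} {e : Sym2 (Fin n)} : e ∈ Kboard n ↔ ¬ e.IsDiag := by
  rw [Kboard, SimpleGraph.mem_edgeFinset, SimpleGraph.edgeSet_top, Set.mem_compl_iff, Sym2.mem_diagSet]

lemma clientGraph_mono {n : ℕ} {C C' : Finset (Sym2 (Fin n))} (h : C ⊆ C') :
    clientGraph C ≤ clientGraph C' :=
  SimpleGraph.fromEdgeSet_mono (Finset.coe_subset.mpr h)

lemma intraF_mono {n : ℕ} {C C' : Finset (Sym2 (Fin n))} (h : C ⊆ C') :
    intraF C ⊆ intraF C' := by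
  intro e he
  rw [mem_intraF] at he ⊢
  induction e using Sym2.ind with
  | _ u v =>
    rw [SimpleGraph.mem_edgeSet] at he ⊢
    exact ⟨he.1, he.2.mono (clientGraph_mono h)⟩

lemma intraF_subset_Kboard {n : ℕ} (C : Finset (Sym2 (Fin n))) :
    intraF C ⊆ Kboard n := by
  intro e he
  rw [mem_intraF] at he
  rw [mem_Kboard]
  exact (reachGraph C).not_isDiag_of_mem_edgeSet he

/-- Number of connected components of Client's graph. -/
noncomputable def kcomp {n : ℕ} (C : Finset (Sym2 (Fin n))) : ℕ :=
  Nat.card (clientGraph C).ConnectedComponent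

lemma connectedComponentMk_surjective {V : Type*} (G : SimpleGraph V) :
    Function.Surjective G.connectedComponentMk := fun c =>
  c.ind fun v => ⟨v, rfl⟩

lemma kcomp_le {n : ℕ} (C : Finset (Sym2 (Fin n))) : kcomp C ≤ n := by
  have := Nat.card_le_card_of_surjective _ (connectedComponentMk_surjective (clientGraph C))
  simpa [kcomp, Nat.card_eq_fintype_card] using this

lemma compMap_surjective {V : Type*} {G G' : SimpleGraph V} (h : G ≤ G') :
    Function.Surjective
      (SimpleGraph.ConnectedComponent.map (SimpleGraph.Hom.ofLE h)) := by
  intro c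
  refine c.ind fun v => ⟨G.connectedComponentMk v, ?_⟩
  rw [SimpleGraph.ConnectedComponent.map_mk]
  rfl

lemma kcomp_mono {n : ℕ} {C C' : Finset (Sym2 (Fin n))} (h : C ⊆ C') :
    kcomp C' ≤ kcomp C :=
  Nat.card_le_card_of_surjective _ (compMap_surjective (clientGraph_mono h))

lemma kcomp_lt {n : ℕ} {C : Finset (Sym2 (Fin n))} {u v : Fin n} (huv : u ≠ v)
    (hnr : ¬ (clientGraph C).Reachable u v) :
    kcomp (insert s(u, v) C) < kcomp C := by
  classical
  haveI : Fintype (clientGraph C).ConnectedComponent := Fintype.ofFinite _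
  haveI : Fintype (clientGraph (insert s(u, v) C)).ConnectedComponent := Fintype.ofFinite _
  rw [kcomp, kcomp, Nat.card_eq_fintype_card, Nat.card_eq_fintype_card]
  have hle : clientGraph C ≤ clientGraph (insert s(u, v) C) :=
    clientGraph_mono (Finset.subset_insert _ _)
  refine Fintype.card_lt_of_surjective_not_injective _ (compMap_surjective hle) ?_
  intro hinj
  have hadj : (clientGraph (insert s(u, v) C)).Adj u v := by
    rw [clientGraph, SimpleGraph.fromEdgeSet_adj]
    exact ⟨by simp, huv⟩
  have h1 : (SimpleGraph.ConnectedComponent.map (SimpleGraph.Hom.ofLE hle))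
      ((clientGraph C).connectedComponentMk u) =
      (SimpleGraph.ConnectedComponent.map (SimpleGraph.Hom.ofLE hle))
      ((clientGraph C).connectedComponentMk v) := by
    rw [SimpleGraph.ConnectedComponent.map_mk, SimpleGraph.ConnectedComponent.map_mk]
    exact SimpleGraph.ConnectedComponent.sound hadj.reachable
  exact hnr (SimpleGraph.ConnectedComponent.exact (hinj h1))

lemma supp_eq_insert_neighborSet {n : ℕ} (C : Finset (Sym2 (Fin n))) (u : Fin n) :
    ((clientGraph C).connectedComponentMk u).supp = insert u ((reachGraph C).neighborSet u) := by
  ext v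
  rw [SimpleGraph.ConnectedComponent.mem_supp_iff, SimpleGraph.ConnectedComponent.eq,
    Set.mem_insert_iff, SimpleGraph.mem_neighborSet]
  constructor
  · intro h
    by_cases hv : v = u
    · exact Or.inl hv
    · exact Or.inr ⟨fun h' => hv h'.symm, h.symm⟩
  · rintro (rfl | ⟨_, h⟩)
    · exact SimpleGraph.Reachable.refl _
    · exact h.symm

lemma supp_ncard_eq {n : ℕ} (C : Finset (Sym2 (Fin n))) (u : Fin n) :
    haveI : DecidableRel (reachGraph C).Adj := Classical.decRel _
    ((clientGraph C).connectedComponentMk u).supp.ncard = (reachGraph C).degree u + 1 := by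
  haveI : DecidableRel (reachGraph C).Adj := Classical.decRel _
  rw [supp_eq_insert_neighborSet, Set.ncard_insert_of_notMem (fun h => h.1 rfl)]
  congr 1
  rw [Set.ncard_eq_toFinset_card']
  congr 1
  ext v
  simp [SimpleGraph.mem_neighborFinset]

lemma key_count {n : ℕ} (C : Finset (Sym2 (Fin n))) :
    ∑ u : Fin n, ((clientGraph C).connectedComponentMk u).supp.ncard
      = 2 * (intraF C).card + n := by
  haveI : DecidableRel (reachGraph C).Adj := Classical.decRel _
  have h1 : ∀ u : Fin n, ((clientGraph C).connectedComponentMk u).supp.ncard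
      = (reachGraph C).degree u + 1 := by
    intro u
    rw [supp_eq_insert_neighborSet, Set.ncard_insert_of_notMem (fun h => h.1 rfl)]
    congr 1
    rw [Set.ncard_eq_toFinset_card']
    rfl
  have h2 : (reachGraph C).edgeFinset = intraF C := by
    ext e; rw [SimpleGraph.mem_edgeFinset, mem_intraF]
  calc ∑ u : Fin n, ((clientGraph C).connectedComponentMk u).supp.ncard
      = ∑ u : Fin n, ((reachGraph C).degree u + 1) :=
        Finset.sum_congr rfl fun u _ => h1 u
    _ = (∑ u : Fin n, (reachGraph C).degree u) + n := by
        rw [Finset.sum_add_distrib, Finset.sum_const, Finset.card_univ, Fintype.card_fin,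
          smul_eq_mul, mul_one]
    _ = 2 * (intraF C).card + n := by
        rw [SimpleGraph.sum_degrees_eq_twice_card_edges, h2]

end CWHelpers

/-- Theorem 2(iii): for every `0 < ε < 1` and `n` large enough, if `q ≤ (1-ε) n/2` then
`C(n,q) ≥ e^{-5/(2ε)+3/2} n`: Client can ensure a connected component with at least
`e^{-5/(2ε)+3/2} n` vertices. -/
theorem stmt4 (ε : ℝ) (hε : 0 < ε) (hε1 : ε < 1) :
    ∃ n₀ : ℕ, ∀ n : ℕ, n₀ ≤ n → ∀ q : ℕ, 0 < q → (q : ℝ) ≤ (1 - ε) * (n : ℝ) / 2 →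
      ClientCanForce (Kboard n) q
        (fun C => ∃ v : Fin n,
          Real.exp (-5 / (2 * ε) + 3 / 2) * (n : ℝ) ≤
            ((((clientGraph C).connectedComponentMk v).supp.ncard : ℝ))) := by
  refine ⟨⌈6/ε⌉₊, fun n hn q hq hqle => ?_⟩
  have hn6 : 6/ε ≤ (n:ℝ) := Nat.ceil_le.mp hn
  have h6 : (6:ℝ) ≤ (n:ℝ) * ε := by rw [div_le_iff₀ hε] at hn6; linarith
  have h7 : (n:ℝ) * ε ≤ (n:ℝ) * 1 := mul_le_mul_of_nonneg_left hε1.le (Nat.cast_nonneg n)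
  have hn6' : (6:ℝ) ≤ (n:ℝ) := by linarith
  have hnpos : 0 < n := by exact_mod_cast show (0:ℝ) < n by linarith
  haveI : Nonempty (Fin n) := ⟨⟨0, hnpos⟩⟩
  set c := Real.exp (-5/(2*ε)+3/2) with hcdef
  have hc : c ≤ ε / 2 := by
    obtain ⟨y, hy⟩ : ∃ y : ℝ, y = 5/(2*ε) - 3/2 := ⟨_, rfl⟩
    have hy0 : 0 < y := by
      have h32 : (3:ℝ)/2 < 5/(2*ε) := by
        rw [lt_div_iff₀ (by positivity)]; nlinarith
      simp only [hy]; linarith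
    have h1 : 1 + y ≤ Real.exp y := by have := Real.add_one_le_exp y; linarith
    have h2 : c = (Real.exp y)⁻¹ := by
      rw [hcdef, ← Real.exp_neg]; congr 1; rw [hy]; ring
    have h3 : (Real.exp y)⁻¹ ≤ (1+y)⁻¹ := by
      apply inv_anti₀ (by linarith) h1
    have h5 : ε * (1+y) = 5/2 - ε/2 := by
      rw [hy]; field_simp; ring
    have h4 : (1+y)⁻¹ ≤ ε/2 := by
      rw [inv_eq_one_div, div_le_div_iff₀ (by linarith) (by norm_num)]
      nlinarith [h5, hε1]
    linarith [h2 ▸ h3]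
  rw [ClientCanForce]
  refine clientCanAux_of_inv q _
    (fun C F => F ⊆ Kboard n ∧ ((Kboard n \ F) \ intraF C).card ≤ (q+1) * (n - kcomp C))
    ?_ ?_ _ _ _ le_rfl ⟨Finset.Subset.refl _, by simp⟩
  · -- step
    intro C F hInv O hOF hOne hOcard
    obtain ⟨hFK, hcard⟩ := hInv
    have hEq : Kboard n \ (F \ O) = (Kboard n \ F) ∪ O := by
      ext e
      simp only [Finset.mem_sdiff, Finset.mem_union]
      constructor
      · rintro ⟨hK, hFO⟩
        by_cases hO : e ∈ O
        · exact Or.inr hO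
        · exact Or.inl ⟨hK, fun hF => hFO ⟨hF, hO⟩⟩
      · rintro (⟨hK, hF⟩ | hO)
        · exact ⟨hK, fun h => hF h.1⟩
        · exact ⟨hFK (hOF hO), fun h => h.2 hO⟩
    by_cases hm : ∃ e ∈ O, e ∉ intraF C
    · obtain ⟨e, heO, hei⟩ := hm
      have heK : e ∈ Kboard n := hFK (hOF heO)
      obtain ⟨u, v, rfl⟩ : ∃ u v, e = s(u, v) := Sym2.ind (fun u v => ⟨u, v, rfl⟩) e
      have huv : u ≠ v := by
        have := mem_Kboard.mp heK
        simpa [Sym2.mk_isDiag_iff] using this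
      have hnr : ¬ (clientGraph C).Reachable u v := fun hr =>
        hei (mem_intraF.mpr ((SimpleGraph.mem_edgeSet _).mpr ⟨huv, hr⟩))
      refine ⟨s(u, v), heO, Finset.Subset.trans Finset.sdiff_subset hFK, ?_⟩
      have hk1 := kcomp_lt huv hnr (C := C)
      have hk2 := kcomp_le C
      have hmono := intraF_mono (Finset.subset_insert s(u, v) C)
      calc ((Kboard n \ (F \ O)) \ intraF (insert s(u, v) C)).card
          ≤ (((Kboard n \ F) \ intraF (insert s(u, v) C)) ∪ O).card := by
            apply Finset.card_le_card
            rw [hEq]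
            intro x hx
            rw [Finset.mem_sdiff, Finset.mem_union] at hx
            rw [Finset.mem_union, Finset.mem_sdiff]
            tauto
        _ ≤ ((Kboard n \ F) \ intraF (insert s(u, v) C)).card + O.card :=
            Finset.card_union_le _ _
        _ ≤ ((Kboard n \ F) \ intraF C).card + (q+1) :=
            add_le_add (Finset.card_le_card
              (Finset.sdiff_subset_sdiff (le_refl _) hmono)) hOcard
        _ ≤ (q+1) * (n - kcomp C) + (q+1) := Nat.add_le_add_right hcard _
        _ ≤ (q+1) * (n - kcomp (insert s(u, v) C)) := by
            rw [← Nat.mul_succ]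
            exact Nat.mul_le_mul_left _ (by omega)
    · push_neg at hm
      obtain ⟨x, hx⟩ := hOne
      refine ⟨x, hx, Finset.Subset.trans Finset.sdiff_subset hFK, ?_⟩
      have hmono := intraF_mono (Finset.subset_insert x C)
      have hkm := kcomp_mono (Finset.subset_insert x C)
      calc ((Kboard n \ (F \ O)) \ intraF (insert x C)).card
          ≤ ((Kboard n \ F) \ intraF C).card := by
            apply Finset.card_le_card
            rw [hEq]
            intro e he
            rw [Finset.mem_sdiff, Finset.mem_union] at he
            rw [Finset.mem_sdiff]
            rcases he with ⟨hA | hO, hni⟩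
            · exact ⟨hA, fun h => hni (hmono h)⟩
            · exact absurd (hmono (hm e hO)) hni
        _ ≤ (q+1) * (n - kcomp C) := hcard
        _ ≤ (q+1) * (n - kcomp (insert x C)) :=
            Nat.mul_le_mul_left _ (by omega)
  · -- final
    intro C hInv
    obtain ⟨-, hcard⟩ := hInv
    rw [Finset.sdiff_empty] at hcard
    by_contra hcon
    push_neg at hcon
    haveI : Finite ((clientGraph C).ConnectedComponent) :=
      Finite.of_surjective _ (connectedComponentMk_surjective (clientGraph C))
    haveI : Nonempty (clientGraph C).ConnectedComponent :=
      ⟨(clientGraph C).connectedComponentMk ⟨0, hnpos⟩⟩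
    have hk1 : 1 ≤ kcomp C := Nat.card_pos
    have hcard' : (Kboard n \ intraF C).card ≤ (q+1) * (n-1) :=
      le_trans hcard (Nat.mul_le_mul_left _ (by omega))
    have hsplit : (Kboard n \ intraF C).card + (intraF C).card = (Kboard n).card :=
      Finset.card_sdiff_add_card_eq_card (intraF_subset_Kboard C)
    have hM : ((Kboard n).card : ℝ) = (n:ℝ) * ((n:ℝ)-1) / 2 := by
      rw [Kboard, SimpleGraph.card_edgeFinset_top_eq_card_choose_two, Fintype.card_fin,
        Nat.cast_choose_two]
    have hIle : ((Kboard n).card : ℝ) ≤ ((intraF C).card : ℝ) + ((q:ℝ)+1) * ((n:ℝ)-1) := by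
      have hnat : (Kboard n).card ≤ (intraF C).card + (q+1)*(n-1) := by omega
      calc ((Kboard n).card : ℝ)
          ≤ (((intraF C).card + (q+1)*(n-1) : ℕ) : ℝ) := Nat.cast_le.mpr hnat
        _ = ((intraF C).card : ℝ) + ((q:ℝ)+1) * ((n:ℝ)-1) := by
            push_cast [Nat.cast_sub (show 1 ≤ n by omega)]; ring
    have hsum := key_count C
    have hcast : (∑ u : Fin n, ((((clientGraph C).connectedComponentMk u).supp.ncard : ℝ)))
        = 2 * ((intraF C).card : ℝ) + (n:ℝ) := by
      have := congrArg (fun m : ℕ => (m:ℝ)) hsum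
      push_cast at this
      exact this
    have hrsum : (∑ u : Fin n, ((((clientGraph C).connectedComponentMk u).supp.ncard : ℝ)))
        < (n:ℝ) * (c * (n:ℝ)) := by
      calc (∑ u : Fin n, ((((clientGraph C).connectedComponentMk u).supp.ncard : ℝ)))
          < ∑ _u : Fin n, c * (n:ℝ) :=
            Finset.sum_lt_sum_of_nonempty Finset.univ_nonempty fun u _ => hcon u
        _ = (n:ℝ) * (c * (n:ℝ)) := by
            rw [Finset.sum_const, Finset.card_univ, Fintype.card_fin, nsmul_eq_mul]
    have hq2 : 2*(q:ℝ) + 2 ≤ (1-ε) * (n:ℝ) + 2 := by linarith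
    have hprod : (2*(q:ℝ)+2) * ((n:ℝ)-1) ≤ ((1-ε)*(n:ℝ)+2) * ((n:ℝ)-1) :=
      mul_le_mul_of_nonneg_right hq2 (by linarith)
    have hcn2 : c * ((n:ℝ) * (n:ℝ)) ≤ (ε/2) * ((n:ℝ) * (n:ℝ)) :=
      mul_le_mul_of_nonneg_right hc (by positivity)
    have h8 : 6 * ((n:ℝ)/2) ≤ ((n:ℝ) * ε) * ((n:ℝ)/2) :=
      mul_le_mul_of_nonneg_right h6 (by positivity)
    nlinarith [hM, hIle, hcast, hrsum, hprod, hcn2, h8, hn6']
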